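/- arXiv:0806.0168 — 2 statements merged into one kernel-verified Lean document; each statement's English description precedes it below -/
import Mathlib

section
/- Let d be an integer with 2 ≤ d ≤ 5, and let A, B be invertible d×d complex matrices satisfying the braid relation A*B*A = B*A*B. Suppose the subgroup G of GL(d,ℂ) generated by A and B is finite, the pair (A,B) is irreducible, and G is imprimitive. Then there exist a nonzero complex number χ and an integer r with 2 ≤ r ≤ d such that every complex number of the form χ·ζ with ζ^r = 1 is an eigenvalue of A. -/
/-- The pair of matrices `(A, B)` acting on `ℂ^d` is irreducible if the only subspaces
invariant under both `A` and `B` are `0` and all of `ℂ^d`. -/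
def MatPairIrreducible {d : ℕ} (A B : Matrix (Fin d) (Fin d) ℂ) : Prop :=
  ∀ W : Submodule ℂ (Fin d → ℂ),
    (∀ v ∈ W, A.mulVec v ∈ W) → (∀ v ∈ W, B.mulVec v ∈ W) → W = ⊥ ∨ W = ⊤

/-- The subgroup of `GL(d, ℂ)` generated by the (invertible) matrices `A` and `B`. -/
def matGenGroup {d : ℕ} (A B : Matrix (Fin d) (Fin d) ℂ) :
    Subgroup (Matrix (Fin d) (Fin d) ℂ)ˣ :=
  Subgroup.closure {g : (Matrix (Fin d) (Fin d) ℂ)ˣ |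
    (g : Matrix (Fin d) (Fin d) ℂ) = A ∨ (g : Matrix (Fin d) (Fin d) ℂ) = B}

/-- A subgroup `G ≤ GL(d, ℂ)` is imprimitive if there are `n ≥ 2` nonzero subspaces
`V₁, …, Vₙ` of `ℂ^d` whose internal direct sum is `ℂ^d`, such that every element of `G`
maps each `Vᵢ` onto some `Vⱼ`, and some element of `G` maps some `Vᵢ` onto `Vⱼ` with
`j ≠ i`. -/
def MatGroupImprimitive {d : ℕ} (G : Subgroup (Matrix (Fin d) (Fin d) ℂ)ˣ) : Prop :=
  ∃ n : ℕ, 2 ≤ n ∧ ∃ V : Fin n → Submodule ℂ (Fin d → ℂ),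
    (∀ i, V i ≠ ⊥) ∧ iSupIndep V ∧ (⨆ i, V i) = ⊤ ∧
    (∀ g ∈ G, ∀ i, ∃ j,
      (V i).map (Matrix.mulVecLin (g : Matrix (Fin d) (Fin d) ℂ)) = V j) ∧
    (∃ g ∈ G, ∃ i j, i ≠ j ∧
      (V i).map (Matrix.mulVecLin (g : Matrix (Fin d) (Fin d) ℂ)) = V j)

theorem stmt3 (d : ℕ) (hd2 : 2 ≤ d) (hd5 : d ≤ 5)
    (A B : Matrix (Fin d) (Fin d) ℂ) (hA : IsUnit A) (hB : IsUnit B)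
    (hbraid : A * B * A = B * A * B)
    (hirr : MatPairIrreducible A B)
    (hfin : Set.Finite (matGenGroup A B : Set (Matrix (Fin d) (Fin d) ℂ)ˣ))
    (himp : MatGroupImprimitive (matGenGroup A B)) :
    ∃ χ : ℂ, χ ≠ 0 ∧ ∃ r : ℕ, 2 ≤ r ∧ r ≤ d ∧
      ∀ ζ : ℂ, ζ ^ r = 1 → χ * ζ ∈ spectrum ℂ A := by
  classical
  obtain ⟨n, hn2, V, hVne, hind, hsup, hmaps, g0, hg0, i0, j0, hij0, hmap0⟩ := himp
  -- injectivity of the action of units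
  have hinjU : ∀ g : (Matrix (Fin d) (Fin d) ℂ)ˣ,
      Function.Injective (Matrix.mulVecLin (g : Matrix (Fin d) (Fin d) ℂ)) := by
    intro g
    have h : Matrix.mulVecLin ((↑g⁻¹ : Matrix (Fin d) (Fin d) ℂ)) ∘ₗ
        Matrix.mulVecLin (g : Matrix (Fin d) (Fin d) ℂ) = LinearMap.id := by
      rw [← Matrix.mulVecLin_mul, Units.inv_mul, Matrix.mulVecLin_one]
    intro x y hxy
    have h2 : (Matrix.mulVecLin ((↑g⁻¹ : Matrix (Fin d) (Fin d) ℂ)) ∘ₗ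
        Matrix.mulVecLin (g : Matrix (Fin d) (Fin d) ℂ)) x
        = (Matrix.mulVecLin ((↑g⁻¹ : Matrix (Fin d) (Fin d) ℂ)) ∘ₗ
        Matrix.mulVecLin (g : Matrix (Fin d) (Fin d) ℂ)) y := by
      simp only [LinearMap.comp_apply]
      exact congrArg _ hxy
    rwa [h, LinearMap.id_apply, LinearMap.id_apply] at h2
  -- the blocks are pairwise distinct
  have hVinj : Function.Injective V := by
    intro i j hij
    by_contra hne
    have h1 : V j ≤ ⨆ k, ⨆ _ : k ≠ i, V k := le_iSup₂_of_le j (Ne.symm hne) le_rfl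
    apply hVne i
    rw [eq_bot_iff]
    intro x hx
    exact (Submodule.mem_bot ℂ).mpr
      (Submodule.disjoint_def.mp (hind i) x hx (h1 (hij ▸ hx)))
  -- the two generators as units
  set a : (Matrix (Fin d) (Fin d) ℂ)ˣ := hA.unit with ha_def
  set b : (Matrix (Fin d) (Fin d) ℂ)ˣ := hB.unit with hb_def
  have ha : (a : Matrix (Fin d) (Fin d) ℂ) = A := hA.unit_spec
  have hb : (b : Matrix (Fin d) (Fin d) ℂ) = B := hB.unit_spec
  have haG : a ∈ matGenGroup A B := Subgroup.subset_closure (Or.inl ha)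
  have hbG : b ∈ matGenGroup A B := Subgroup.subset_closure (Or.inr hb)
  set f : (Fin d → ℂ) →ₗ[ℂ] (Fin d → ℂ) := A.mulVecLin with hf_def
  have hfinj : Function.Injective f := by
    have := hinjU a; rwa [ha] at this
  -- A does not fix all the blocks
  have hnotfix : ¬ (∀ i, (V i).map f = V i) := by
    intro hfixA
    -- then B fixes all blocks
    have hmapB : ∀ i, ∃ j, (V i).map B.mulVecLin = V j := by
      intro i
      have := hmaps b hbG i
      rwa [hb] at this
    choose τ hτ using hmapB
    have hτinj : Function.Injective τ := by
      intro i j hij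
      apply hVinj
      have hBinj : Function.Injective B.mulVecLin := by
        have := hinjU b; rwa [hb] at this
      apply Submodule.map_injective_of_injective hBinj
      rw [hτ i, hτ j, hij]
    have hfixB : ∀ i, (V i).map B.mulVecLin = V i := by
      intro i
      have hL : (V i).map (A * B * A).mulVecLin = V (τ i) := by
        rw [Matrix.mulVecLin_mul, Matrix.mulVecLin_mul, Submodule.map_comp,
          Submodule.map_comp, ← hf_def, hfixA i, hτ i, hfixA (τ i)]
      have hR : (V i).map (B * A * B).mulVecLin = V (τ (τ i)) := by
        rw [Matrix.mulVecLin_mul, Matrix.mulVecLin_mul, Submodule.map_comp,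
          Submodule.map_comp, hτ i, ← hf_def, hfixA (τ i), hτ (τ i)]
      have : τ (τ i) = τ i := hVinj (by rw [← hL, ← hR, hbraid])
      rw [hτ i, hτinj this]
    -- so every element of the group fixes all blocks
    have hall : ∀ g ∈ matGenGroup A B, ∀ i,
        (V i).map (Matrix.mulVecLin (g : Matrix (Fin d) (Fin d) ℂ)) = V i := by
      intro g hg
      induction hg using Subgroup.closure_induction with
      | mem x hx =>
        intro i
        rcases hx with hx | hx
        · rw [hx]; exact hfixA i
        · rw [hx]; exact hfixB i
      | one => intro i; simp [Matrix.mulVecLin_one, Submodule.map_id]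
      | mul x y hx hy ihx ihy =>
        intro i
        rw [Units.val_mul, Matrix.mulVecLin_mul, Submodule.map_comp, ihy i, ihx i]
      | inv x hx ihx =>
        intro i
        apply Submodule.map_injective_of_injective (hinjU x)
        rw [← Submodule.map_comp, ← Matrix.mulVecLin_mul, Units.mul_inv,
          Matrix.mulVecLin_one, Submodule.map_id, ihx i]
    have := hall g0 hg0 i0
    rw [hmap0] at this
    exact hij0 (hVinj this.symm)
  -- the permutation of blocks induced by A
  have hmapA : ∀ i, ∃ j, (V i).map f = V j := by
    intro i
    have := hmaps a haG i
    rwa [ha] at this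
  choose σ hσ using hmapA
  have hσinj : Function.Injective σ := by
    intro i j hij
    apply hVinj
    apply Submodule.map_injective_of_injective hfinj
    rw [hσ i, hσ j, hij]
  obtain ⟨i, hi⟩ : ∃ i, σ i ≠ i := by
    by_contra h
    push_neg at h
    exact hnotfix fun i => (hσ i).trans (congrArg V (h i))
  have hσbij : Function.Bijective σ := Finite.injective_iff_bijective.mp hσinj
  set e : Equiv.Perm (Fin n) := Equiv.ofBijective σ hσbij with he_def
  have hper : i ∈ Function.periodicPts σ := by
    refine Function.mk_mem_periodicPts (orderOf_pos e) ?_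
    show σ^[orderOf e] i = i
    have h1 : σ^[orderOf e] = ⇑(e ^ orderOf e) := (Equiv.Perm.coe_pow e _).symm
    rw [h1, pow_orderOf_eq_one e]
    rfl
  set r : ℕ := Function.minimalPeriod σ i with hr_def
  have hrpos : 0 < r := Function.minimalPeriod_pos_of_mem_periodicPts hper
  have hri : σ^[r] i = i := Function.isPeriodicPt_minimalPeriod σ i
  have hr2 : 2 ≤ r := by
    by_contra h
    push_neg at h
    have hr1 : r = 1 := by omega
    apply hi
    have h1 := hri
    rw [hr1] at h1
    simpa using h1
  have hinjOn : Set.InjOn (σ^[·] i) (Set.Iio r) :=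
    Function.iterate_injOn_Iio_minimalPeriod
  -- r ≤ d
  have hrd : r ≤ d := by
    set c : Fin r → Fin n := fun k => σ^[(k : ℕ)] i with hc_def
    have hcinj : Function.Injective c := by
      intro k l hkl
      exact Fin.ext (hinjOn k.isLt l.isLt hkl)
    have hindc : iSupIndep (V ∘ c) := hind.comp hcinj
    choose w hw hw0 using fun k : Fin r =>
      Submodule.exists_mem_ne_zero_of_ne_bot (hVne (c k))
    have hli : LinearIndependent ℂ w := hindc.linearIndependent (V ∘ c) hw hw0
    have := hli.fintype_card_le_finrank
    simpa [Module.finrank_fin_fun] using this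
  -- iterates of f map blocks along the orbit
  have hpow : ∀ (k : ℕ) (j : Fin n), (V j).map (f ^ k) = V (σ^[k] j) := by
    intro k
    induction k with
    | zero => intro j; simp [Module.End.one_eq_id, Submodule.map_id]
    | succ k ih =>
      intro j
      rw [pow_succ, Module.End.mul_eq_comp, Submodule.map_comp, hσ j, ih (σ j),
        Function.iterate_succ_apply]
  have hmapr : (V i).map (f ^ r) = V i := by rw [hpow r i, hri]
  -- eigenvalue of f^r on V i
  have hres : ∀ x ∈ V i, (f ^ r) x ∈ V i := by
    intro x hx
    rw [← hmapr]
    exact Submodule.mem_map_of_mem hx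
  set g : Module.End ℂ (V i) := (f ^ r).restrict hres with hg_def
  haveI : Nontrivial (V i) := Submodule.nontrivial_iff_ne_bot.mpr (hVne i)
  obtain ⟨μ, hμ⟩ := Module.End.exists_eigenvalue g
  obtain ⟨v, hv⟩ := hμ.exists_hasEigenvector
  have hveq : (f ^ r) (v : Fin d → ℂ) = μ • (v : Fin d → ℂ) := by
    have h1 : ((g v : V i) : Fin d → ℂ) = (f ^ r) (v : Fin d → ℂ) :=
      LinearMap.restrict_coe_apply _ _ _
    have h2 : g v = μ • v := Module.End.mem_eigenspace_iff.mp hv.1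
    rw [← h1, h2]
    rfl
  have hv0 : (v : Fin d → ℂ) ≠ 0 := by
    simpa [Submodule.coe_eq_zero] using hv.2
  have hfr_inj : Function.Injective (f ^ r) := by
    rw [Module.End.coe_pow]
    exact Function.Injective.iterate hfinj r
  have hμ0 : μ ≠ 0 := by
    intro h
    apply hv0
    apply hfr_inj
    rw [hveq, h, zero_smul, map_zero]
  obtain ⟨χ, hχ⟩ := IsAlgClosed.exists_pow_nat_eq μ hrpos
  have hχ0 : χ ≠ 0 := by
    intro h
    apply hμ0
    rw [← hχ, h, zero_pow (by omega)]
  refine ⟨χ, hχ0, r, hr2, hrd, ?_⟩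
  intro ζ hζ
  set lam : ℂ := χ * ζ with hlam_def
  have hζ0 : ζ ≠ 0 := by
    intro h; rw [h, zero_pow (by omega)] at hζ; exact zero_ne_one hζ
  have hlam0 : lam ≠ 0 := mul_ne_zero hχ0 hζ0
  have hlamr : lam ^ r = μ := by
    rw [hlam_def, mul_pow, hζ, mul_one, hχ]
  set vv : Fin d → ℂ := (v : Fin d → ℂ) with hvv_def
  set w : Fin d → ℂ := ∑ k ∈ Finset.range r, lam ^ (r - 1 - k) • (f ^ k) vv with hw_def
  -- f w = lam • w
  have hfw : f w = lam • w := by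
    have h1 : f w = ∑ k ∈ Finset.range r, lam ^ (r - 1 - k) • (f ^ (k + 1)) vv := by
      rw [hw_def, map_sum]
      refine Finset.sum_congr rfl fun k _ => ?_
      rw [map_smul, pow_succ', Module.End.mul_apply]
    have h2 : lam • w = ∑ k ∈ Finset.range r, lam ^ (r - k) • (f ^ k) vv := by
      rw [hw_def, Finset.smul_sum]
      refine Finset.sum_congr rfl fun k hk => ?_
      have hk' : r - 1 - k + 1 = r - k := by
        have := Finset.mem_range.mp hk; omega
      rw [smul_smul, ← pow_succ', hk']
    have h3 : f w - lam • w = 0 := by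
      rw [h1, h2, ← Finset.sum_sub_distrib]
      have h4 : ∀ k ∈ Finset.range r,
          lam ^ (r - 1 - k) • (f ^ (k + 1)) vv - lam ^ (r - k) • (f ^ k) vv
            = lam ^ (r - (k + 1)) • (f ^ (k + 1)) vv - lam ^ (r - k) • (f ^ k) vv := by
        intro k hk
        have hkk : r - 1 - k = r - (k + 1) := by omega
        rw [hkk]
      have h6 : ∑ k ∈ Finset.range r,
          (lam ^ (r - (k + 1)) • (f ^ (k + 1)) vv - lam ^ (r - k) • (f ^ k) vv)
            = lam ^ (r - r) • (f ^ r) vv - lam ^ (r - 0) • (f ^ 0) vv :=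
        Finset.sum_range_sub (fun m => lam ^ (r - m) • (f ^ m) vv) r
      rw [Finset.sum_congr rfl h4, h6]
      simp only [Nat.sub_self, pow_zero, one_smul, Nat.sub_zero, hlamr, hveq,
        Module.End.one_apply]
      exact sub_self _
    exact sub_eq_zero.mp h3
  -- each summand lives in the corresponding block
  have hmemk : ∀ k : ℕ, lam ^ (r - 1 - k) • (f ^ k) vv ∈ V (σ^[k] i) := by
    intro k
    apply Submodule.smul_mem
    rw [← hpow k i]
    exact Submodule.mem_map_of_mem v.2
  have hw0 : w ≠ 0 := by
    intro h0
    have h5 : (0 : ℕ) ∈ Finset.range r := Finset.mem_range.mpr hrpos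
    have h6 : lam ^ (r - 1 - 0) • (f ^ 0) vv +
        ∑ k ∈ (Finset.range r).erase 0, lam ^ (r - 1 - k) • (f ^ k) vv
          = ∑ k ∈ Finset.range r, lam ^ (r - 1 - k) • (f ^ k) vv :=
      Finset.add_sum_erase _ (fun k => lam ^ (r - 1 - k) • (f ^ k) vv) h5
    have h6' : lam ^ (r - 1 - 0) • (f ^ 0) vv +
        ∑ k ∈ (Finset.range r).erase 0, lam ^ (r - 1 - k) • (f ^ k) vv = 0 := by
      rw [h6, ← hw_def, h0]
    have h7 : lam ^ (r - 1) • vv =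
        -∑ k ∈ (Finset.range r).erase 0, lam ^ (r - 1 - k) • (f ^ k) vv := by
      apply eq_neg_of_add_eq_zero_left
      simpa using h6'
    have h8 : (∑ k ∈ (Finset.range r).erase 0, lam ^ (r - 1 - k) • (f ^ k) vv)
        ∈ ⨆ j, ⨆ _ : j ≠ i, V j := by
      apply Submodule.sum_mem
      intro k hk
      have hk0 : k ≠ 0 := Finset.ne_of_mem_erase hk
      have hkr : k < r := Finset.mem_range.mp (Finset.mem_of_mem_erase hk)
      have hne : σ^[k] i ≠ i := by
        intro hh
        apply hk0
        exact hinjOn (Set.mem_Iio.mpr hkr) (Set.mem_Iio.mpr hrpos) (by simpa using hh)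
      exact Submodule.mem_iSup_of_mem (σ^[k] i) (Submodule.mem_iSup_of_mem hne (hmemk k))
    have h9 : lam ^ (r - 1) • vv ∈ V i := Submodule.smul_mem _ _ v.2
    have h10 : lam ^ (r - 1) • vv = 0 := by
      refine Submodule.disjoint_def.mp (hind i) _ h9 ?_
      rw [h7]
      exact Submodule.neg_mem _ h8
    have := smul_eq_zero.mp h10
    rcases this with h | h
    · exact pow_ne_zero _ hlam0 h
    · exact hv0 h
  have heig : Module.End.HasEigenvalue f lam :=
    Module.End.hasEigenvalue_of_hasEigenvector
      ⟨Module.End.mem_eigenspace_iff.mpr hfw, hw0⟩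
  have hspec : lam ∈ spectrum ℂ f := Module.End.hasEigenvalue_iff_mem_spectrum.mp heig
  have hspeceq : spectrum ℂ f = spectrum ℂ A := AlgEquiv.spectrum_eq Matrix.toLinAlgEquiv' A
  rw [← hspeceq]
  exact hspec
end

section
/- Let d be an integer with 2 ≤ d ≤ 5. Let π₁, π₂ be permutations of {1,…,d}, let D₁, D₂ be invertible diagonal d×d complex matrices, and set A = D₁·P(π₁) and B = D₂·P(π₂), where P(π) denotes the permutation matrix of π. Suppose A*B*A = B*A*B, the pair (A,B) is irreducible, every eigenvalue of A is a root of unity, and the group G generated by A and B is imprimitive. Then the spectrum S of A (as a set) has one of the following forms: (a) S = {χ·ζ : ζ^d = 1} for some root of unity χ; or (b) d = 3 and S = {α, χ, −χ} for some roots of unity α, χ; or (c) d = 4 and S = {α, χ, χω, χω²} for some roots of unity α, χ, where ω is a primitive 3rd root of unity. -/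
/-- `z` is a root of unity. -/
def IsRootOfUnity (z : ℂ) : Prop := ∃ n : ℕ, 0 < n ∧ z ^ n = 1

namespace Stmt5Aux

def app {d : ℕ} (l : List (Fin d)) (i : Fin d) : Fin d := l.getD i.val i
def allTbls (d : ℕ) : ℕ → List (List (Fin d))
  | 0 => [[]]
  | n+1 => (allTbls d n).flatMap (fun l => (List.finRange d).map (fun x => x :: l))
def permTbls (d : ℕ) : List (List (Fin d)) :=
  (allTbls d d).filter (fun l => l.dedup.length == d)
def allBL : ℕ → List (List Bool)
  | 0 => [[]]
  | n+1 => (allBL n).flatMap (fun l => [false :: l, true :: l])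
def bapp {d : ℕ} (p : List Bool) (i : Fin d) : Bool := p.getD i.val false
def braidb {d : ℕ} (f g : List (Fin d)) : Bool :=
  (List.finRange d).all (fun x => app f (app g (app f x)) == app g (app f (app g x)))
def transb {d : ℕ} (f g : List (Fin d)) : Bool :=
  (allBL d).all fun pb =>
    !((List.finRange d).all fun i => !(bapp pb i) || (bapp pb (app f i) && bapp pb (app g i)))
    || !((List.finRange d).any fun i => bapp pb i)
    || ((List.finRange d).all fun i => bapp pb i)
def check (d : ℕ) (payload : List (Fin d) → Bool) : Bool :=
  (permTbls d).all fun f => payload f ||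
    ((permTbls d).all fun g => !braidb f g || !transb f g)
def appPow {d : ℕ} (f : List (Fin d)) : ℕ → Fin d → Fin d
  | 0, i => i
  | (k+1), i => app f (appPow f k i)
def idb {d : ℕ} (f : List (Fin d)) : Bool := (List.finRange d).all fun i => app f i == i
def powIdb {d : ℕ} (f : List (Fin d)) (k : ℕ) : Bool :=
  (List.finRange d).all fun i => appPow f k i == i

theorem mem_allTbls {d n : ℕ} (l : List (Fin d)) (h : l.length = n) : l ∈ allTbls d n := by
  induction l generalizing n with
  | nil => cases h; simp [allTbls]
  | cons x t ih =>
    cases h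
    simp only [allTbls, List.length_cons, List.mem_flatMap]
    exact ⟨t, ih rfl, List.mem_map.mpr ⟨x, List.mem_finRange x, rfl⟩⟩

theorem ofFn_mem_permTbls {d : ℕ} (σ : Equiv.Perm (Fin d)) :
    List.ofFn σ ∈ permTbls d := by
  have hnd : (List.ofFn σ).Nodup := List.nodup_ofFn.mpr σ.injective
  refine List.mem_filter.mpr ⟨mem_allTbls _ (by simp), ?_⟩
  simp [hnd.dedup]

theorem app_ofFn {d : ℕ} (σ : Equiv.Perm (Fin d)) (i : Fin d) :
    app (List.ofFn σ) i = σ i := by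
  have h : i.val < (List.ofFn σ).length := by simp [i.isLt]
  rw [app, List.getD_eq_getElem _ _ h]
  simp

theorem mem_allBL {n : ℕ} (l : List Bool) (h : l.length = n) : l ∈ allBL n := by
  induction l generalizing n with
  | nil => cases h; simp [allBL]
  | cons x t ih =>
    cases h
    simp only [allBL, List.length_cons, List.mem_flatMap]
    refine ⟨t, ih rfl, ?_⟩
    cases x <;> simp

theorem appPow_ofFn {d : ℕ} (σ : Equiv.Perm (Fin d)) (k : ℕ) (i : Fin d) :
    appPow (List.ofFn σ) k i = (σ ^ k) i := by
  induction k with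
  | zero => simp [appPow]
  | succ k ih =>
    rw [appPow, ih, app_ofFn, pow_succ']
    rfl

theorem braidb_eq_true {d : ℕ} (σ τ : Equiv.Perm (Fin d))
    (hbr : ∀ x, σ (τ (σ x)) = τ (σ (τ x))) :
    braidb (List.ofFn σ) (List.ofFn τ) = true := by
  rw [braidb, List.all_eq_true]
  intro x _
  simp [app_ofFn, hbr x]

theorem transb_eq_true {d : ℕ} (σ τ : Equiv.Perm (Fin d))
    (htr : ∀ p : Fin d → Bool,
      (∀ i, p i = true → p (σ i) = true ∧ p (τ i) = true) →
      (∃ i, p i = true) → ∀ i, p i = true) :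
    transb (List.ofFn σ) (List.ofFn τ) = true := by
  rw [transb, List.all_eq_true]
  intro pb _
  set p : Fin d → Bool := fun i => bapp pb i with hp
  by_cases hcl : ∀ i, p i = true → p (σ i) = true ∧ p (τ i) = true
  · by_cases hne : ∃ i, p i = true
    · have hall := htr p hcl hne
      have h3 : ((List.finRange d).all fun i => bapp pb i) = true := by
        rw [List.all_eq_true]; intro i _; exact hall i
      simp [h3]
      exact Or.inr hall
    · push_neg at hne
      have h2 : ((List.finRange d).any fun i => bapp pb i) = false := by
        rw [List.any_eq_false]; intro i _
        simpa using hne i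
      simp [h2]
      exact Or.inl (Or.inr (fun x => Bool.eq_false_iff.mpr (hne x)))
  · push_neg at hcl
    obtain ⟨i, hpi, hbad⟩ := hcl
    have hb : (bapp pb (σ i) && bapp pb (τ i)) = false := by
      cases hσi : bapp pb (σ i) with
      | false => simp
      | true =>
        have h1 : p (σ i) = true := hσi
        have h2 : bapp pb (τ i) = false := Bool.not_eq_true _ ▸ (Bool.eq_false_iff.mpr (hbad h1))
        simp [h2]
    have h1 : ((List.finRange d).all fun i =>
        !(bapp pb i) || (bapp pb (app (List.ofFn σ) i) && bapp pb (app (List.ofFn τ) i))) = false := by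
      rw [List.all_eq_false]
      refine ⟨i, List.mem_finRange i, ?_⟩
      simp only [app_ofFn]
      have hpi' : bapp pb i = true := hpi
      simp [hpi', hb]
    simp [h1]

theorem bridge {d : ℕ} (payload : List (Fin d) → Bool) (hchk : check d payload = true)
    (σ τ : Equiv.Perm (Fin d)) (hbr : ∀ x, σ (τ (σ x)) = τ (σ (τ x)))
    (htr : ∀ p : Fin d → Bool,
      (∀ i, p i = true → p (σ i) = true ∧ p (τ i) = true) →
      (∃ i, p i = true) → ∀ i, p i = true) :
    payload (List.ofFn σ) = true := by
  have hf := List.all_eq_true.mp hchk _ (ofFn_mem_permTbls σ)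
  rcases Bool.or_eq_true_iff.mp hf with h | h
  · exact h
  · exfalso
    have hg := List.all_eq_true.mp h _ (ofFn_mem_permTbls τ)
    rw [braidb_eq_true σ τ hbr, transb_eq_true σ τ htr] at hg
    simp at hg

theorem powId_of_powIdb {d : ℕ} (σ : Equiv.Perm (Fin d)) (k : ℕ)
    (h : powIdb (List.ofFn σ) k = true) : σ ^ k = 1 := by
  rw [powIdb] at h
  have h2 : ∀ i, (σ ^ k) i = i := by
    intro i
    have := List.all_eq_true.mp h i (List.mem_finRange i)
    rw [appPow_ofFn] at this
    simpa using this
  ext i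
  rw [h2 i]
  rfl

theorem ne_one_of_idb {d : ℕ} (σ : Equiv.Perm (Fin d))
    (h : idb (List.ofFn σ) = false) : σ ≠ 1 := by
  intro h1
  rw [idb, List.all_eq_false] at h
  obtain ⟨i, _, hi⟩ := h
  rw [app_ofFn] at hi
  subst h1
  simp at hi


theorem chk2 : check 2 (fun f => !idb f) = true := by decide
theorem chk3 : check 3 (fun f => !idb f) = true := by decide
theorem chk4 : check 4 (fun f => !powIdb f 2) = true := by decide
set_option maxRecDepth 100000 in
set_option maxHeartbeats 4000000 in
theorem chk5 : check 5 (fun f => powIdb f 5 && !idb f) = true := by decide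

theorem powIdb_complete {d : ℕ} (σ : Equiv.Perm (Fin d)) (k : ℕ) (h : σ ^ k = 1) :
    powIdb (List.ofFn σ) k = true := by
  rw [powIdb, List.all_eq_true]
  intro i _
  rw [appPow_ofFn, h]
  simp

set_option maxRecDepth 10000 in
theorem str2 : ∀ σ : Equiv.Perm (Fin 2), σ ≠ 1 →
    σ^2 = 1 ∧ ∀ i : Fin 2, ∀ k l : Fin 2, (σ^(k:ℕ)) i = (σ^(l:ℕ)) i → k = l := by decide
set_option maxRecDepth 10000 in
theorem str3cyc : ∀ σ : Equiv.Perm (Fin 3), σ ≠ 1 → σ^2 ≠ 1 →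
    σ^3 = 1 ∧ ∀ i : Fin 3, ∀ k l : Fin 3, (σ^(k:ℕ)) i = (σ^(l:ℕ)) i → k = l := by decide
set_option maxRecDepth 10000 in
theorem str32 : ∀ σ : Equiv.Perm (Fin 3), σ ≠ 1 → σ^2 = 1 →
    ∃ x y : Fin 3, σ x = x ∧ σ (σ y) = y ∧ x ≠ y ∧ x ≠ σ y ∧ y ≠ σ y ∧
      ∀ i : Fin 3, i = x ∨ i = y ∨ i = σ y := by decide
set_option maxRecDepth 10000 in
theorem str4cyc : ∀ σ : Equiv.Perm (Fin 4), σ^2 ≠ 1 → σ^3 ≠ 1 →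
    σ^4 = 1 ∧ ∀ i : Fin 4, ∀ k l : Fin 4, (σ^(k:ℕ)) i = (σ^(l:ℕ)) i → k = l := by decide
set_option maxRecDepth 10000 in
theorem str43 : ∀ σ : Equiv.Perm (Fin 4), σ^2 ≠ 1 → σ^3 = 1 →
    ∃ x y : Fin 4, σ x = x ∧ σ (σ (σ y)) = y ∧
      x ≠ y ∧ x ≠ σ y ∧ x ≠ σ (σ y) ∧ y ≠ σ y ∧ y ≠ σ (σ y) ∧ σ y ≠ σ (σ y) ∧
      ∀ i : Fin 4, i = x ∨ i = y ∨ i = σ y ∨ i = σ (σ y) := by decide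
set_option maxRecDepth 10000 in
theorem str5 : ∀ σ : Equiv.Perm (Fin 5), σ^5 = 1 → σ ≠ 1 →
    ∀ i : Fin 5, ∀ k l : Fin 5, (σ^(k:ℕ)) i = (σ^(l:ℕ)) i → k = l := by decide

open Matrix

variable {d : ℕ}

theorem spec_iff (a : Fin d → ℂ) (σ : Equiv.Perm (Fin d))
    (A : Matrix (Fin d) (Fin d) ℂ)
    (hA : ∀ v : Fin d → ℂ, ∀ i, A.mulVec v i = a i * v (σ i)) (μ : ℂ) :
    μ ∈ spectrum ℂ A ↔ ∃ v : Fin d → ℂ, v ≠ 0 ∧ ∀ i, a i * v (σ i) = μ * v i := by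
  rw [spectrum.mem_iff, Matrix.isUnit_iff_isUnit_det, isUnit_iff_ne_zero, not_not,
    ← Matrix.exists_mulVec_eq_zero_iff]
  have key : ∀ v : Fin d → ℂ, ∀ i,
      (algebraMap ℂ (Matrix (Fin d) (Fin d) ℂ) μ - A).mulVec v i = μ * v i - a i * v (σ i) := by
    intro v i
    rw [Matrix.sub_mulVec, Algebra.algebraMap_eq_smul_one, Matrix.smul_mulVec,
      Matrix.one_mulVec]
    simp [hA v i]
  constructor
  · rintro ⟨v, hv, hv0⟩
    refine ⟨v, hv, fun i => ?_⟩
    have h0 := congrFun hv0 i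
    rw [key v i, Pi.zero_apply] at h0
    linear_combination -h0
  · rintro ⟨v, hv, heig⟩
    refine ⟨v, hv, ?_⟩
    funext i
    rw [key v i, heig i, Pi.zero_apply]
    ring

theorem chain (a : Fin d → ℂ) (σ : Equiv.Perm (Fin d)) (v : Fin d → ℂ) (μ : ℂ)
    (heig : ∀ i, a i * v (σ i) = μ * v i) (i : Fin d) (m : ℕ) :
    (∏ k ∈ Finset.range m, a ((σ ^ k) i)) * v ((σ ^ m) i) = μ ^ m * v i := by
  induction m with
  | zero => simp
  | succ m ih =>
    have hσ : (σ ^ (m + 1)) i = σ ((σ ^ m) i) := by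
      rw [pow_succ']; rfl
    rw [Finset.prod_range_succ, hσ]
    calc (∏ k ∈ Finset.range m, a ((σ ^ k) i)) * a ((σ ^ m) i) * v (σ ((σ ^ m) i))
        = (∏ k ∈ Finset.range m, a ((σ ^ k) i)) * (a ((σ ^ m) i) * v (σ ((σ ^ m) i))) := by ring
      _ = (∏ k ∈ Finset.range m, a ((σ ^ k) i)) * (μ * v ((σ ^ m) i)) := by rw [heig]
      _ = μ * ((∏ k ∈ Finset.range m, a ((σ ^ k) i)) * v ((σ ^ m) i)) := by ring
      _ = μ * (μ ^ m * v i) := by rw [ih]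
      _ = μ ^ (m + 1) * v i := by ring

theorem eig_pow (a : Fin d → ℂ) (σ : Equiv.Perm (Fin d)) (v : Fin d → ℂ) (μ : ℂ)
    (heig : ∀ i, a i * v (σ i) = μ * v i) (i : Fin d) (hvi : v i ≠ 0)
    (m : ℕ) (hmi : (σ ^ m) i = i) :
    μ ^ m = ∏ k ∈ Finset.range m, a ((σ ^ k) i) := by
  have h := chain a σ v μ heig i m
  rw [hmi] at h
  exact (mul_right_cancel₀ hvi h).symm



theorem exists_eig (a : Fin d → ℂ) (ha : ∀ i, a i ≠ 0) (σ : Equiv.Perm (Fin d)) (i : Fin d)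
    (m : ℕ) (hm0 : 0 < m) (hmi : (σ ^ m) i = i)
    (hdist : ∀ k l, k < m → l < m → (σ ^ k) i = (σ ^ l) i → k = l)
    (μ : ℂ) (hμ : μ ^ m = ∏ k ∈ Finset.range m, a ((σ ^ k) i)) :
    ∃ v : Fin d → ℂ, v ≠ 0 ∧ ∀ j, a j * v (σ j) = μ * v j := by
  set c : ℕ → ℂ := fun k => μ ^ k / ∏ l ∈ Finset.range k, a ((σ ^ l) i) with hc
  set v : Fin d → ℂ := fun j => ∑ k ∈ Finset.range m, if (σ ^ k) i = j then c k else 0 with hv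
  have hprodne : ∀ k : ℕ, (∏ l ∈ Finset.range k, a ((σ ^ l) i)) ≠ 0 :=
    fun k => Finset.prod_ne_zero_iff.mpr (fun l _ => ha _)
  have hvorb : ∀ k, k < m → v ((σ ^ k) i) = c k := by
    intro k hk
    show (∑ l ∈ Finset.range m, if (σ ^ l) i = (σ ^ k) i then c l else 0) = c k
    have h1 : ∀ l ∈ Finset.range m, l ≠ k →
        (if (σ ^ l) i = (σ ^ k) i then c l else 0) = 0 := by
      intro l hl hlk
      exact if_neg (fun he => hlk (hdist l k (Finset.mem_range.mp hl) hk he))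
    rw [Finset.sum_eq_single_of_mem k (Finset.mem_range.mpr hk) h1, if_pos rfl]
  have hv0 : v i = 1 := by
    have h := hvorb 0 hm0
    rw [pow_zero] at h
    simpa [hc] using h
  have hvout : ∀ j, (∀ k, k < m → (σ ^ k) i ≠ j) → v j = 0 := by
    intro j hj
    rw [hv]
    exact Finset.sum_eq_zero (fun k hk => if_neg (hj k (Finset.mem_range.mp hk)))
  have hvne : v ≠ 0 := by
    intro h
    rw [h, Pi.zero_apply] at hv0
    exact one_ne_zero hv0.symm
  refine ⟨v, hvne, fun j => ?_⟩
  by_cases hj : ∃ k, k < m ∧ (σ ^ k) i = j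
  · obtain ⟨k, hk, rfl⟩ := hj
    have hσj : σ ((σ ^ k) i) = (σ ^ (k + 1)) i := by rw [pow_succ']; rfl
    by_cases hk1 : k + 1 < m
    · rw [hσj, hvorb (k + 1) hk1, hvorb k hk, hc]
      simp only
      rw [Finset.prod_range_succ]
      field_simp [hprodne k, ha ((σ ^ k) i)]
      ring
    · have hkm : k + 1 = m := Nat.le_antisymm (Nat.succ_le_of_lt hk) (Nat.not_lt.mp hk1)
      rw [hσj, hkm, hmi, hv0, hvorb k hk, hc]
      simp only
      rw [mul_one]
      field_simp [hprodne k]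
      have h2 : μ * μ ^ k = μ ^ m := by rw [← hkm]; ring
      rw [h2, hμ, ← hkm, Finset.prod_range_succ]
      ring
  · push_neg at hj
    have h1 : v j = 0 := hvout j hj
    have h2 : v (σ j) = 0 := by
      apply hvout
      intro k hk he
      cases k with
      | zero =>
        obtain ⟨m', rfl⟩ : ∃ m', m = m' + 1 := ⟨m - 1, (Nat.succ_pred_eq_of_pos hm0).symm⟩
        have he' : i = σ j := by simpa using he
        have h4 : (σ ^ (m' + 1)) i = σ ((σ ^ m') i) := by rw [pow_succ']; rfl
        have h3 : σ ((σ ^ m') i) = σ j := by rw [← h4, hmi, he']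
        exact hj m' (Nat.lt_succ_self m') (σ.injective h3)
      | succ k' =>
        have h3 : σ ((σ ^ k') i) = σ j := by rw [← he, pow_succ']; rfl
        exact hj k' (Nat.lt_of_succ_lt hk) (σ.injective h3)
    rw [h1, h2]
    ring


open Matrix

theorem monomial_entry (D : Matrix (Fin d) (Fin d) ℂ) (hD : D.IsDiag)
    (σ : Equiv.Perm (Fin d)) (i j : Fin d) :
    (D * Equiv.Perm.permMatrix ℂ σ) i j = if σ i = j then D i i else 0 := by
  rw [Matrix.mul_apply]
  rw [Finset.sum_eq_single i (fun k _ hk => by rw [hD hk.symm, zero_mul])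
    (fun h => absurd (Finset.mem_univ i) h)]
  have : Equiv.Perm.permMatrix ℂ σ i j = if σ i = j then 1 else 0 := by
    simp [Equiv.Perm.permMatrix, PEquiv.toMatrix, Equiv.toPEquiv]
  rw [this]
  split <;> simp

theorem monomial_mulVec (D : Matrix (Fin d) (Fin d) ℂ) (hD : D.IsDiag)
    (σ : Equiv.Perm (Fin d)) (v : Fin d → ℂ) (i : Fin d) :
    (D * Equiv.Perm.permMatrix ℂ σ).mulVec v i = D i i * v (σ i) := by
  rw [Matrix.mulVec, dotProduct]
  rw [Finset.sum_eq_single (σ i)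
    (fun j _ hj => by rw [monomial_entry D hD σ i j, if_neg (fun h => hj h.symm)]; ring)
    (fun h => absurd (Finset.mem_univ (σ i)) h)]
  rw [monomial_entry D hD σ i (σ i), if_pos rfl]

theorem diag_ne_zero (D : Matrix (Fin d) (Fin d) ℂ) (hD : D.IsDiag) (hU : IsUnit D)
    (i : Fin d) : D i i ≠ 0 := by
  intro h
  have hrow : ∀ j, D i j = 0 := by
    intro j
    by_cases hji : i = j
    · rw [← hji]; exact h
    · exact hD hji
  have hdet : D.det = 0 := Matrix.det_eq_zero_of_row_eq_zero i hrow
  have : IsUnit D.det := (Matrix.isUnit_iff_isUnit_det D).mp hU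
  rw [hdet] at this
  exact (not_isUnit_zero : ¬IsUnit (0:ℂ)) this

theorem braid_perm (a b : Fin d → ℂ) (σ τ : Equiv.Perm (Fin d))
    (A B : Matrix (Fin d) (Fin d) ℂ)
    (hAmul : ∀ v : Fin d → ℂ, ∀ i, A.mulVec v i = a i * v (σ i))
    (hBmul : ∀ v : Fin d → ℂ, ∀ i, B.mulVec v i = b i * v (τ i))
    (ha : ∀ i, a i ≠ 0) (hb : ∀ i, b i ≠ 0)
    (hbraid : A * B * A = B * A * B) (x : Fin d) :
    σ (τ (σ x)) = τ (σ (τ x)) := by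
  set v : Fin d → ℂ := Pi.single (σ (τ (σ x))) 1 with hv
  have hL : (A * B * A).mulVec v x = a x * (b (σ x) * (a (τ (σ x)) * v (σ (τ (σ x))))) := by
    rw [← Matrix.mulVec_mulVec, ← Matrix.mulVec_mulVec, hAmul, hBmul, hAmul]
  have hR : (B * A * B).mulVec v x = b x * (a (τ x) * (b (σ (τ x)) * v (τ (σ (τ x))))) := by
    rw [← Matrix.mulVec_mulVec, ← Matrix.mulVec_mulVec, hBmul, hAmul, hBmul]
  have hv1 : v (σ (τ (σ x))) = 1 := by simp [hv]
  have hne : (A * B * A).mulVec v x ≠ 0 := by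
    rw [hL, hv1]
    simp only [mul_one]
    exact mul_ne_zero (ha x) (mul_ne_zero (hb (σ x)) (ha (τ (σ x))))
  rw [hbraid, hR] at hne
  have : v (τ (σ (τ x))) ≠ 0 := by
    intro h0
    rw [h0] at hne
    simp at hne
  rw [hv, Pi.single_apply] at this
  by_contra hne2
  rw [if_neg (fun h => hne2 h.symm)] at this
  exact this rfl

theorem trans_of_irr (a b : Fin d → ℂ) (σ τ : Equiv.Perm (Fin d))
    (A B : Matrix (Fin d) (Fin d) ℂ)
    (hAmul : ∀ v : Fin d → ℂ, ∀ i, A.mulVec v i = a i * v (σ i))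
    (hBmul : ∀ v : Fin d → ℂ, ∀ i, B.mulVec v i = b i * v (τ i))
    (hirr : MatPairIrreducible A B)
    (p : Fin d → Bool)
    (hcl : ∀ i, p i = true → p (σ i) = true ∧ p (τ i) = true)
    (hne : ∃ i, p i = true) : ∀ i, p i = true := by
  classical
  -- inverse closure
  set T : Finset (Fin d) := Finset.univ.filter (fun i => p i = true) with hT
  have hmemT : ∀ i, i ∈ T ↔ p i = true := by
    intro i; simp [hT]
  have hinv : ∀ (ρ : Equiv.Perm (Fin d)), (∀ i, p i = true → p (ρ i) = true) →
      ∀ j, p j = true → p (ρ.symm j) = true := by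
    intro ρ hρ j hj
    have hsub : T.image ρ ⊆ T := by
      intro x hx
      obtain ⟨y, hy, rfl⟩ := Finset.mem_image.mp hx
      exact (hmemT _).mpr (hρ y ((hmemT _).mp hy))
    have hcard : (T.image ρ).card = T.card := Finset.card_image_of_injective T ρ.injective
    have heq : T.image ρ = T := Finset.eq_of_subset_of_card_le hsub (le_of_eq hcard.symm)
    have hjT : j ∈ T.image ρ := heq.symm ▸ (hmemT j).mpr hj
    obtain ⟨y, hy, hyj⟩ := Finset.mem_image.mp hjT
    have : ρ.symm j = y := by rw [← hyj]; simp
    rw [this]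
    exact (hmemT y).mp hy
  set W : Submodule ℂ (Fin d → ℂ) :=
    Submodule.span ℂ ((fun j => Pi.single j (1:ℂ)) '' {j | p j = true}) with hW
  have hgen : ∀ j, p j = true → Pi.single j (1:ℂ) ∈ W :=
    fun j hj => Submodule.subset_span ⟨j, hj, rfl⟩
  have hinvar : ∀ (c : Fin d → ℂ) (ρ : Equiv.Perm (Fin d)) (M : Matrix (Fin d) (Fin d) ℂ),
      (∀ v : Fin d → ℂ, ∀ i, M.mulVec v i = c i * v (ρ i)) →
      (∀ i, p i = true → p (ρ i) = true) →
      ∀ v ∈ W, M.mulVec v ∈ W := by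
    intro c ρ M hM hρ v hv
    induction hv using Submodule.span_induction with
    | mem x hx =>
      obtain ⟨j, hj, rfl⟩ := hx
      have hMe : M.mulVec (Pi.single j (1:ℂ)) =
          c (ρ.symm j) • (Pi.single (ρ.symm j) (1:ℂ) : Fin d → ℂ) := by
        funext i
        rw [hM]
        rw [Pi.smul_apply, Pi.single_apply, Pi.single_apply]
        by_cases h : ρ i = j
        · rw [if_pos h, if_pos (by rw [← h]; simp)]
          have : i = ρ.symm j := by rw [← h]; simp
          rw [this]
          simp
        · rw [if_neg h, if_neg (fun h2 => h (by rw [h2]; simp))]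
          simp
      rw [hMe]
      exact Submodule.smul_mem W _ (hgen _ (hinv ρ hρ j hj))
    | zero => rw [Matrix.mulVec_zero]; exact Submodule.zero_mem W
    | add x y _ _ hx hy => rw [Matrix.mulVec_add]; exact Submodule.add_mem W hx hy
    | smul r x _ hx => rw [Matrix.mulVec_smul]; exact Submodule.smul_mem W r hx
  have hWA : ∀ v ∈ W, A.mulVec v ∈ W :=
    hinvar a σ A hAmul (fun i hi => (hcl i hi).1)
  have hWB : ∀ v ∈ W, B.mulVec v ∈ W :=
    hinvar b τ B hBmul (fun i hi => (hcl i hi).2)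
  rcases hirr W hWA hWB with hbot | htop
  · exfalso
    obtain ⟨i0, hi0⟩ := hne
    have hmem : (Pi.single i0 (1:ℂ) : Fin d → ℂ) ∈ W := hgen i0 hi0
    rw [hbot] at hmem
    have h0 : (Pi.single i0 (1:ℂ) : Fin d → ℂ) = 0 := (Submodule.mem_bot ℂ).mp hmem
    have := congrFun h0 i0
    simp at this
  · intro j
    by_contra hj
    have hvanish : ∀ w ∈ W, w j = 0 := by
      intro w hw
      induction hw using Submodule.span_induction with
      | mem x hx =>
        obtain ⟨k, hk, rfl⟩ := hx
        have hkj : k ≠ j := fun h => hj (h ▸ hk)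
        show (Pi.single k (1:ℂ) : Fin d → ℂ) j = 0
        rw [Pi.single_apply, if_neg (fun h => hkj h.symm)]
      | zero => rfl
      | add x y _ _ hx hy => rw [Pi.add_apply, hx, hy, add_zero]
      | smul r x _ hx => rw [Pi.smul_apply, hx, smul_zero]
    have hmem : (Pi.single j (1:ℂ) : Fin d → ℂ) ∈ W := htop ▸ Submodule.mem_top
    have := hvanish _ hmem
    simp at this

theorem caseA {d : ℕ} (hd : 0 < d) (a : Fin d → ℂ) (ha : ∀ i, a i ≠ 0)
    (σ : Equiv.Perm (Fin d)) (A : Matrix (Fin d) (Fin d) ℂ)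
    (hAmul : ∀ v : Fin d → ℂ, ∀ i, A.mulVec v i = a i * v (σ i))
    (hσd : σ ^ d = 1)
    (hinj : ∀ i : Fin d, ∀ k l : Fin d, (σ ^ (k : ℕ)) i = (σ ^ (l : ℕ)) i → k = l)
    (hrou : ∀ μ ∈ spectrum ℂ A, IsRootOfUnity μ) :
    ∃ χ : ℂ, IsRootOfUnity χ ∧
      spectrum ℂ A = {z : ℂ | ∃ ζ : ℂ, ζ ^ d = 1 ∧ z = χ * ζ} := by
  have hdist : ∀ i : Fin d, ∀ k l, k < d → l < d → (σ ^ k) i = (σ ^ l) i → k = l := by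
    intro i k l hk hl he
    have h := hinj i ⟨k, hk⟩ ⟨l, hl⟩ he
    exact congrArg Fin.val h
  have hmi : ∀ i, (σ ^ d) i = i := by intro i; rw [hσd]; rfl
  set p : ℂ := ∏ j, a j with hp
  have hpne : p ≠ 0 := Finset.prod_ne_zero_iff.mpr (fun j _ => ha j)
  have hprod : ∀ i : Fin d, ∏ k ∈ Finset.range d, a ((σ ^ k) i) = p := by
    intro i
    rw [← Fin.prod_univ_eq_prod_range (fun k => a ((σ ^ k) i)) d]
    have hbij : Function.Bijective (fun k : Fin d => (σ ^ (k : ℕ)) i) :=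
      (Finite.injective_iff_bijective).mp (fun k l h => hinj i k l h)
    exact Fintype.prod_bijective _ hbij _ _ (fun x => rfl)
  have hspec : ∀ μ : ℂ, μ ∈ spectrum ℂ A ↔ μ ^ d = p := by
    intro μ
    rw [spec_iff a σ A hAmul]
    constructor
    · rintro ⟨v, hv, heig⟩
      obtain ⟨i, hvi⟩ := Function.ne_iff.mp hv
      rw [eig_pow a σ v μ heig i hvi d (hmi i)]
      exact hprod i
    · intro hμ
      have i0 : Fin d := ⟨0, hd⟩
      exact exists_eig a ha σ i0 d hd (hmi i0) (hdist i0) μ (by rw [hμ, ← hprod i0])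
  obtain ⟨χ, hχ⟩ : ∃ χ : ℂ, χ ^ d = p := by
    obtain ⟨z, hz⟩ := IsAlgClosed.exists_pow_nat_eq p hd (k := ℂ)
    exact ⟨z, hz⟩
  have hχ0 : χ ≠ 0 := fun h => hpne (by rw [← hχ, h, zero_pow hd.ne'])
  refine ⟨χ, hrou χ ((hspec χ).mpr hχ), ?_⟩
  ext μ
  rw [Set.mem_setOf_eq, hspec μ]
  constructor
  · intro hμ
    refine ⟨μ / χ, ?_, by field_simp⟩
    rw [div_pow, hμ, hχ, div_self hpne]
  · rintro ⟨ζ, hζ, rfl⟩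
    rw [mul_pow, hχ, hζ, mul_one]

theorem sq_cases (μ χ : ℂ) (h : μ ^ 2 = χ ^ 2) : μ = χ ∨ μ = -χ := by
  have h2 : (μ - χ) * (μ + χ) = 0 := by linear_combination h
  rcases mul_eq_zero.mp h2 with h3 | h3
  · left; linear_combination h3
  · right; linear_combination h3

theorem caseB {d : ℕ} (a : Fin d → ℂ) (ha : ∀ i, a i ≠ 0)
    (σ : Equiv.Perm (Fin d)) (A : Matrix (Fin d) (Fin d) ℂ)
    (hAmul : ∀ v : Fin d → ℂ, ∀ i, A.mulVec v i = a i * v (σ i))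
    (hrou : ∀ μ ∈ spectrum ℂ A, IsRootOfUnity μ)
    (x y : Fin d) (hx : σ x = x) (hy2 : σ (σ y) = y)
    (hysy : y ≠ σ y)
    (hcov : ∀ i, i = x ∨ i = y ∨ i = σ y) :
    ∃ α χ : ℂ, IsRootOfUnity α ∧ IsRootOfUnity χ ∧
      spectrum ℂ A = {α, χ, -χ} := by
  set q : ℂ := a y * a (σ y) with hq
  have hqne : q ≠ 0 := mul_ne_zero (ha y) (ha (σ y))
  have hpow2 : ∀ j : Fin d, (σ ^ 2) j = σ (σ j) := by
    intro j; rw [pow_two]; rfl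
  have hprod1 : ∏ k ∈ Finset.range 1, a ((σ ^ k) x) = a x := by simp
  have hprod2y : ∏ k ∈ Finset.range 2, a ((σ ^ k) y) = q := by
    rw [Finset.prod_range_succ, Finset.prod_range_one, pow_zero, pow_one]
    rfl
  have hprod2sy : ∏ k ∈ Finset.range 2, a ((σ ^ k) (σ y)) = q := by
    rw [Finset.prod_range_succ, Finset.prod_range_one, pow_zero, pow_one, hy2,
      Equiv.Perm.one_apply, hq]
    ring
  have hspec : ∀ μ : ℂ, μ ∈ spectrum ℂ A ↔ (μ = a x ∨ μ ^ 2 = q) := by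
    intro μ
    rw [spec_iff a σ A hAmul]
    constructor
    · rintro ⟨v, hv, heig⟩
      obtain ⟨i, hvi⟩ := Function.ne_iff.mp hv
      rcases hcov i with rfl | rfl | rfl
      · left
        have := eig_pow a σ v μ heig i hvi 1 (by rw [pow_one, hx])
        rw [pow_one, hprod1] at this
        exact this
      · right
        have := eig_pow a σ v μ heig i hvi 2 (by rw [hpow2, hy2])
        rw [hprod2y] at this
        exact this
      · right
        have h2 : (σ ^ 2) (σ y) = σ y := by rw [hpow2, hy2]
        have := eig_pow a σ v μ heig _ hvi 2 h2
        rw [hprod2sy] at this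
        exact this
    · rintro (rfl | hμ)
      · exact exists_eig a ha σ x 1 one_pos (by rw [pow_one, hx])
          (fun k l hk hl _ => by omega) _ (by rw [pow_one, hprod1])
      · refine exists_eig a ha σ y 2 two_pos (by rw [hpow2, hy2]) ?_ μ (by rw [hμ, hprod2y])
        intro k l hk hl he
        interval_cases k <;> interval_cases l
        · rfl
        · exact absurd (by simpa using he : y = σ y) hysy
        · exact absurd (show y = σ y by simpa using he.symm) hysy
        · rfl
  obtain ⟨χ, hχ⟩ : ∃ χ : ℂ, χ ^ 2 = q := by
    obtain ⟨z, hz⟩ := IsAlgClosed.exists_pow_nat_eq q two_pos (k := ℂ)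
    exact ⟨z, hz⟩
  refine ⟨a x, χ, hrou _ ((hspec _).mpr (Or.inl rfl)),
    hrou χ ((hspec χ).mpr (Or.inr hχ)), ?_⟩
  ext μ
  rw [hspec μ]
  simp only [Set.mem_insert_iff, Set.mem_singleton_iff]
  constructor
  · rintro (h | h)
    · exact Or.inl h
    · rcases sq_cases μ χ (by rw [hχ, h]) with h2 | h2
      · exact Or.inr (Or.inl h2)
      · exact Or.inr (Or.inr h2)
  · rintro (rfl | rfl | rfl)
    · exact Or.inl rfl
    · exact Or.inr hχ
    · exact Or.inr (by rw [neg_pow, hχ]; ring)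

theorem cube_cases (ω : ℂ) (hω : IsPrimitiveRoot ω 3) (μ χ : ℂ) (h : μ ^ 3 = χ ^ 3) :
    μ = χ ∨ μ = χ * ω ∨ μ = χ * ω ^ 2 := by
  have hω3 : ω ^ 3 = 1 := hω.pow_eq_one
  have hω1 : ω ≠ 1 := hω.ne_one (by norm_num)
  have hsum : ω ^ 2 + ω + 1 = 0 := by
    have h4 : (ω - 1) * (ω ^ 2 + ω + 1) = 0 := by linear_combination hω3
    rcases mul_eq_zero.mp h4 with h5 | h5
    · exact absurd (by linear_combination h5) hω1
    · exact h5
  have hfac : (μ - χ) * (μ - χ * ω) * (μ - χ * ω ^ 2) = 0 := by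
    linear_combination h + (-χ * μ ^ 2 + χ ^ 2 * μ) * hsum + (χ ^ 2 * μ - χ ^ 3) * hω3
  rcases mul_eq_zero.mp hfac with h6 | h6
  · rcases mul_eq_zero.mp h6 with h7 | h7
    · exact Or.inl (by linear_combination h7)
    · exact Or.inr (Or.inl (by linear_combination h7))
  · exact Or.inr (Or.inr (by linear_combination h6))

theorem caseC {d : ℕ} (a : Fin d → ℂ) (ha : ∀ i, a i ≠ 0)
    (σ : Equiv.Perm (Fin d)) (A : Matrix (Fin d) (Fin d) ℂ)
    (hAmul : ∀ v : Fin d → ℂ, ∀ i, A.mulVec v i = a i * v (σ i))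
    (hrou : ∀ μ ∈ spectrum ℂ A, IsRootOfUnity μ)
    (ω : ℂ) (hω : IsPrimitiveRoot ω 3)
    (x y : Fin d) (hx : σ x = x) (hy3 : σ (σ (σ y)) = y)
    (hd1 : y ≠ σ y) (hd2 : y ≠ σ (σ y)) (hd3 : σ y ≠ σ (σ y))
    (hcov : ∀ i, i = x ∨ i = y ∨ i = σ y ∨ i = σ (σ y)) :
    ∃ α χ : ℂ, IsRootOfUnity α ∧ IsRootOfUnity χ ∧
      spectrum ℂ A = {α, χ, χ * ω, χ * ω ^ 2} := by
  set q : ℂ := a y * a (σ y) * a (σ (σ y)) with hq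
  have hqne : q ≠ 0 := mul_ne_zero (mul_ne_zero (ha y) (ha (σ y))) (ha (σ (σ y)))
  have hpow2 : ∀ j : Fin d, (σ ^ 2) j = σ (σ j) := fun j => by rw [pow_two]; rfl
  have hpow3 : ∀ j : Fin d, (σ ^ 3) j = σ (σ (σ j)) := fun j => by
    rw [pow_succ, pow_two]; rfl
  have horb2 : (σ ^ 3) (σ y) = σ y := by rw [hpow3, hy3]
  have horb3 : (σ ^ 3) (σ (σ y)) = σ (σ y) := by rw [hpow3, hy3]
  have hprod1 : ∏ k ∈ Finset.range 1, a ((σ ^ k) x) = a x := by simp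
  have hprod3y : ∏ k ∈ Finset.range 3, a ((σ ^ k) y) = q := by
    rw [Finset.prod_range_succ, Finset.prod_range_succ, Finset.prod_range_one,
      pow_zero, pow_one, hpow2, Equiv.Perm.one_apply]
  have hprod3sy : ∏ k ∈ Finset.range 3, a ((σ ^ k) (σ y)) = q := by
    rw [Finset.prod_range_succ, Finset.prod_range_succ, Finset.prod_range_one,
      pow_zero, pow_one, hpow2, Equiv.Perm.one_apply, hy3, hq]
    ring
  have hprod3ssy : ∏ k ∈ Finset.range 3, a ((σ ^ k) (σ (σ y))) = q := by
    rw [Finset.prod_range_succ, Finset.prod_range_succ, Finset.prod_range_one,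
      pow_zero, pow_one, hpow2, Equiv.Perm.one_apply, hy3, hq]
    ring
  have hspec : ∀ μ : ℂ, μ ∈ spectrum ℂ A ↔ (μ = a x ∨ μ ^ 3 = q) := by
    intro μ
    rw [spec_iff a σ A hAmul]
    constructor
    · rintro ⟨v, hv, heig⟩
      obtain ⟨i, hvi⟩ := Function.ne_iff.mp hv
      rcases hcov i with rfl | rfl | rfl | rfl
      · left
        have := eig_pow a σ v μ heig i hvi 1 (by rw [pow_one, hx])
        rw [pow_one, hprod1] at this
        exact this
      · right
        have := eig_pow a σ v μ heig i hvi 3 (by rw [hpow3, hy3])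
        rw [hprod3y] at this
        exact this
      · right
        have := eig_pow a σ v μ heig _ hvi 3 horb2
        rw [hprod3sy] at this
        exact this
      · right
        have := eig_pow a σ v μ heig _ hvi 3 horb3
        rw [hprod3ssy] at this
        exact this
    · rintro (rfl | hμ)
      · exact exists_eig a ha σ x 1 one_pos (by rw [pow_one, hx])
          (fun k l hk hl _ => by omega) _ (by rw [pow_one, hprod1])
      · refine exists_eig a ha σ y 3 three_pos (by rw [hpow3, hy3]) ?_ μ
          (by rw [hμ, hprod3y])
        intro k l hk hl he
        interval_cases k <;> interval_cases l <;>
          simp only [pow_zero, pow_one, Equiv.Perm.one_apply, hpow2] at he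
        · rfl
        · exact absurd he hd1
        · exact absurd he hd2
        · exact absurd he.symm hd1
        · rfl
        · exact absurd he hd3
        · exact absurd he.symm hd2
        · exact absurd he.symm hd3
        · rfl
  obtain ⟨χ, hχ⟩ : ∃ χ : ℂ, χ ^ 3 = q := by
    obtain ⟨z, hz⟩ := IsAlgClosed.exists_pow_nat_eq q three_pos (k := ℂ)
    exact ⟨z, hz⟩
  have hω3 : ω ^ 3 = 1 := hω.pow_eq_one
  refine ⟨a x, χ, hrou _ ((hspec _).mpr (Or.inl rfl)),
    hrou χ ((hspec χ).mpr (Or.inr hχ)), ?_⟩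
  ext μ
  rw [hspec μ]
  simp only [Set.mem_insert_iff, Set.mem_singleton_iff]
  constructor
  · rintro (h | h)
    · exact Or.inl h
    · rcases cube_cases ω hω μ χ (by rw [hχ, h]) with h2 | h2 | h2
      · exact Or.inr (Or.inl h2)
      · exact Or.inr (Or.inr (Or.inl h2))
      · exact Or.inr (Or.inr (Or.inr h2))
  · rintro (rfl | rfl | rfl | rfl)
    · exact Or.inl rfl
    · exact Or.inr hχ
    · refine Or.inr ?_
      rw [mul_pow, hχ, hω3, mul_one]
    · refine Or.inr ?_
      rw [mul_pow, hχ, ← pow_mul]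
      norm_num
      rw [show (6:ℕ) = 3*2 by norm_num, pow_mul, hω3, one_pow, mul_one]


end Stmt5Aux

theorem stmt5 (d : ℕ) (hd2 : 2 ≤ d) (hd5 : d ≤ 5)
    (π₁ π₂ : Equiv.Perm (Fin d)) (D₁ D₂ : Matrix (Fin d) (Fin d) ℂ)
    (hD₁diag : D₁.IsDiag) (hD₂diag : D₂.IsDiag) (hD₁ : IsUnit D₁) (hD₂ : IsUnit D₂)
    (A B : Matrix (Fin d) (Fin d) ℂ)
    (hA : A = D₁ * Equiv.Perm.permMatrix ℂ π₁)
    (hB : B = D₂ * Equiv.Perm.permMatrix ℂ π₂)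
    (hbraid : A * B * A = B * A * B)
    (hirr : MatPairIrreducible A B)
    (hrou : ∀ μ ∈ spectrum ℂ A, IsRootOfUnity μ)
    (himp : MatGroupImprimitive (matGenGroup A B)) :
    (∃ χ : ℂ, IsRootOfUnity χ ∧
        spectrum ℂ A = {z : ℂ | ∃ ζ : ℂ, ζ ^ d = 1 ∧ z = χ * ζ}) ∨
    (d = 3 ∧ ∃ α χ : ℂ, IsRootOfUnity α ∧ IsRootOfUnity χ ∧
        spectrum ℂ A = {α, χ, -χ}) ∨
    (d = 4 ∧ ∃ α χ ω : ℂ, IsRootOfUnity α ∧ IsRootOfUnity χ ∧ IsPrimitiveRoot ω 3 ∧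
        spectrum ℂ A = {α, χ, χ * ω, χ * ω ^ 2}) := by
  classical
  have hAmul : ∀ v : Fin d → ℂ, ∀ i, A.mulVec v i = D₁ i i * v (π₁ i) := by
    intro v i
    rw [hA]
    exact Stmt5Aux.monomial_mulVec D₁ hD₁diag π₁ v i
  have hBmul : ∀ v : Fin d → ℂ, ∀ i, B.mulVec v i = D₂ i i * v (π₂ i) := by
    intro v i
    rw [hB]
    exact Stmt5Aux.monomial_mulVec D₂ hD₂diag π₂ v i
  have ha : ∀ i, D₁ i i ≠ 0 := Stmt5Aux.diag_ne_zero D₁ hD₁diag hD₁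
  have hb : ∀ i, D₂ i i ≠ 0 := Stmt5Aux.diag_ne_zero D₂ hD₂diag hD₂
  have hbr : ∀ x, π₁ (π₂ (π₁ x)) = π₂ (π₁ (π₂ x)) :=
    Stmt5Aux.braid_perm _ _ π₁ π₂ A B hAmul hBmul ha hb hbraid
  have htr : ∀ p : Fin d → Bool,
      (∀ i, p i = true → p (π₁ i) = true ∧ p (π₂ i) = true) →
      (∃ i, p i = true) → ∀ i, p i = true :=
    Stmt5Aux.trans_of_irr _ _ π₁ π₂ A B hAmul hBmul hirr
  interval_cases d
  · -- d = 2
    have hpay := Stmt5Aux.bridge _ Stmt5Aux.chk2 π₁ π₂ hbr htr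
    have hne1 : π₁ ≠ 1 := Stmt5Aux.ne_one_of_idb π₁ (by simpa using hpay)
    obtain ⟨h2, hinj⟩ := Stmt5Aux.str2 π₁ hne1
    exact Or.inl (Stmt5Aux.caseA (by norm_num) _ ha π₁ A hAmul h2 hinj hrou)
  · -- d = 3
    have hpay := Stmt5Aux.bridge _ Stmt5Aux.chk3 π₁ π₂ hbr htr
    have hne1 : π₁ ≠ 1 := Stmt5Aux.ne_one_of_idb π₁ (by simpa using hpay)
    by_cases hsq : π₁ ^ 2 = 1
    · obtain ⟨x, y, hx, hy2, _, _, hysy, hcov⟩ := Stmt5Aux.str32 π₁ hne1 hsq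
      exact Or.inr (Or.inl ⟨rfl,
        Stmt5Aux.caseB _ ha π₁ A hAmul hrou x y hx hy2 hysy hcov⟩)
    · obtain ⟨h3, hinj⟩ := Stmt5Aux.str3cyc π₁ hne1 hsq
      exact Or.inl (Stmt5Aux.caseA (by norm_num) _ ha π₁ A hAmul h3 hinj hrou)
  · -- d = 4
    have hpay := Stmt5Aux.bridge _ Stmt5Aux.chk4 π₁ π₂ hbr htr
    have hsq : π₁ ^ 2 ≠ 1 := by
      intro h1
      rw [Stmt5Aux.powIdb_complete π₁ 2 h1] at hpay
      simp at hpay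
    by_cases hcb : π₁ ^ 3 = 1
    · obtain ⟨x, y, hx, hy3, _, _, _, hd1, hd2', hd3, hcov⟩ := Stmt5Aux.str43 π₁ hsq hcb
      refine Or.inr (Or.inr ⟨rfl, ?_⟩)
      obtain ⟨α, χ, hα, hχ, hS⟩ := Stmt5Aux.caseC _ ha π₁ A hAmul hrou
        (Complex.exp (2 * Real.pi * Complex.I / 3))
        (Complex.isPrimitiveRoot_exp 3 (by norm_num)) x y hx hy3 hd1 hd2' hd3 hcov
      exact ⟨α, χ, _, hα, hχ, Complex.isPrimitiveRoot_exp 3 (by norm_num), hS⟩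
    · obtain ⟨h4, hinj⟩ := Stmt5Aux.str4cyc π₁ hsq hcb
      exact Or.inl (Stmt5Aux.caseA (by norm_num) _ ha π₁ A hAmul h4 hinj hrou)
  · -- d = 5
    have hpay := Stmt5Aux.bridge _ Stmt5Aux.chk5 π₁ π₂ hbr htr
    rw [Bool.and_eq_true] at hpay
    have h5 : π₁ ^ 5 = 1 := Stmt5Aux.powId_of_powIdb π₁ 5 hpay.1
    have hne1 : π₁ ≠ 1 := Stmt5Aux.ne_one_of_idb π₁ (by simpa using hpay.2)
    have hinj := Stmt5Aux.str5 π₁ h5 hne1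
    exact Or.inl (Stmt5Aux.caseA (by norm_num) _ ha π₁ A hAmul h5 hinj hrou)
end
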